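/- Let Υ = (M, C, O) be a compatibility scenario and B a behavior on Υ. Then B is noncontextual (i.e. admits a global section: a probability distribution p_M on O^M whose marginal on each maximal context γ ∈ C equals p_γ) if and only if B is factorizable. -/

import Mathlib

noncomputable section

/-- A compatibility scenario: a finite set of measurements `M`, finite nonempty
outcome sets `O x` for each measurement, and an antichain `C` of maximal contexts. -/
structure Scenario where
  M : Type
  [fintypeM : Fintype M]
  [decEqM : DecidableEq M]
  O : M → Type
  [fintypeO : ∀ x, Fintype (O x)]
  [decEqO : ∀ x, DecidableEq (O x)]
  [nonemptyO : ∀ x, Nonempty (O x)]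
  C : Finset (Finset M)
  antichain : ∀ γ ∈ C, ∀ γ' ∈ C, γ ⊆ γ' → γ = γ'

attribute [instance] Scenario.fintypeM Scenario.decEqM Scenario.fintypeO
  Scenario.decEqO Scenario.nonemptyO

/-- The elements of a set of measurements, as a type. -/
def Scenario.El (S : Scenario) (γ : Finset S.M) : Type := {x : S.M // x ∈ γ}

instance (S : Scenario) (γ : Finset S.M) : Fintype (S.El γ) :=
  show Fintype {x : S.M // x ∈ γ} from inferInstance

instance (S : Scenario) (γ : Finset S.M) : DecidableEq (S.El γ) :=
  show DecidableEq {x : S.M // x ∈ γ} from inferInstance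

/-- Joint outcomes `O^γ` of a set of measurements `γ`. -/
def Scenario.JO (S : Scenario) (γ : Finset S.M) : Type := (x : S.El γ) → S.O x.1

instance (S : Scenario) (γ : Finset S.M) : Fintype (S.JO γ) :=
  show Fintype ((x : S.El γ) → S.O x.1) from inferInstance

instance (S : Scenario) (γ : Finset S.M) : DecidableEq (S.JO γ) :=
  show DecidableEq ((x : S.El γ) → S.O x.1) from inferInstance

instance (S : Scenario) (γ : Finset S.M) : Nonempty (S.JO γ) :=
  ⟨fun _ => Classical.arbitrary _⟩

/-- Global outcome assignments `O^M`. -/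
abbrev Scenario.Glob (S : Scenario) : Type := (x : S.M) → S.O x

/-- Restriction of a global assignment to a set of measurements. -/
def Scenario.restr (S : Scenario) (γ : Finset S.M) (o : S.Glob) : S.JO γ :=
  fun x => o x.1

/-- The (maximal) contexts of a scenario. -/
def Scenario.Ctx (S : Scenario) : Type := {γ : Finset S.M // γ ∈ S.C}

instance (S : Scenario) : Fintype S.Ctx :=
  show Fintype {γ : Finset S.M // γ ∈ S.C} from inferInstance

instance (S : Scenario) : DecidableEq S.Ctx :=
  show DecidableEq {γ : Finset S.M // γ ∈ S.C} from inferInstance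

/-- A behavior (box): a family of real-valued functions, one for each maximal context. -/
def Behavior (S : Scenario) : Type := (γ : S.Ctx) → S.JO γ.1 → ℝ

/-- The family forms a probability distribution on each maximal context. -/
def IsProb (S : Scenario) (B : Behavior S) : Prop :=
  ∀ γ : S.Ctx, (∀ t, 0 ≤ B γ t) ∧ (∑ t, B γ t = 1)

/-- Kochen–Specker noncontextuality: existence of a global section, i.e. a probability
distribution on `O^M` whose marginal on each maximal context equals the behavior. -/
def IsNC (S : Scenario) (B : Behavior S) : Prop :=
  ∃ pM : S.Glob → ℝ, (∀ o, 0 ≤ pM o) ∧ (∑ o, pM o = 1) ∧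
    ∀ (γ : S.Ctx) (t : S.JO γ.1),
      B γ t = ∑ o : S.Glob, if S.restr γ.1 o = t then pM o else 0

/-- Restriction between nested sets of measurements. -/
def Scenario.restr2 (S : Scenario) {γ δ : Finset S.M} (h : δ ⊆ γ) (t : S.JO γ) :
    S.JO δ := fun x => t ⟨x.1, h x.2⟩

/-- The no-disturbance condition: marginals agree on intersections of contexts. -/
def IsND (S : Scenario) (B : Behavior S) : Prop :=
  ∀ γ γ' : S.Ctx, ∀ u : S.JO (γ.1 ∩ γ'.1),
    (∑ t : S.JO γ.1, if S.restr2 Finset.inter_subset_left t = u then B γ t else 0) =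
      (∑ t : S.JO γ'.1, if S.restr2 Finset.inter_subset_right t = u then B γ' t else 0)

/-- Factorizability: a noncontextual (hidden-variable) factorizable model. -/
def IsFactorizable (S : Scenario) (B : Behavior S) : Prop :=
  ∃ (k : ℕ) (q : Fin k → ℝ) (e : (x : S.M) → Fin k → S.O x → ℝ),
    (∀ l, 0 ≤ q l) ∧ (∑ l, q l = 1) ∧
    (∀ x l, (∀ o, 0 ≤ e x l o) ∧ (∑ o, e x l o = 1)) ∧
    ∀ (γ : S.Ctx) (t : S.JO γ.1),
      B γ t = ∑ l, q l * ∏ x : S.El γ.1, e x.1 l (t x)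

/-- The deterministic behavior induced by a global outcome assignment. -/
def detB (S : Scenario) (o : S.Glob) : Behavior S :=
  fun γ t => if S.restr γ.1 o = t then 1 else 0
/-- Splitting a global assignment into its part on `γ` and its part off `γ`. -/
def splitEquiv (S : Scenario) (γ : Finset S.M) :
    S.Glob ≃ (S.JO γ × ((x : {x : S.M // x ∉ γ}) → S.O x.1)) where
  toFun o := ⟨fun x => o x.1, fun x => o x.1⟩
  invFun p := fun x => if h : x ∈ γ then p.1 ⟨x, h⟩ else p.2 ⟨x, h⟩
  left_inv o := by
    funext x
    by_cases h : x ∈ γ <;> simp [h]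
  right_inv p := by
    refine Prod.ext ?_ ?_
    · funext x; exact dif_pos x.2
    · funext x; exact dif_neg x.2

lemma split_sum (S : Scenario) (γ : Finset S.M) (g : (x : S.M) → S.O x → ℝ)
    (t : S.JO γ) :
    (∑ o : S.Glob, if S.restr γ o = t then ∏ x : S.M, g x (o x) else 0)
      = (∏ x : S.El γ, g x.1 (t x)) * ∏ x : {x : S.M // x ∉ γ}, ∑ a, g x.1 a := by
  classical
  rw [← Equiv.sum_comp (splitEquiv S γ).symm
      (fun o : S.Glob => if S.restr γ o = t then ∏ x : S.M, g x (o x) else 0)]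
  rw [Fintype.sum_prod_type]
  have hsplit : ∀ p : S.JO γ × ((x : {x : S.M // x ∉ γ}) → S.O x.1),
      S.restr γ ((splitEquiv S γ).symm p) = p.1 := by
    intro p
    funext x
    exact dif_pos x.2
  have hprod : ∀ p : S.JO γ × ((x : {x : S.M // x ∉ γ}) → S.O x.1),
      (∏ x : S.M, g x (((splitEquiv S γ).symm p) x))
        = (∏ x : S.El γ, g x.1 (p.1 x)) * ∏ x : {x : S.M // x ∉ γ}, g x.1 (p.2 x) := by
    intro p
    rw [← Fintype.prod_subtype_mul_prod_subtype (fun x => x ∈ γ)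
        (fun x => g x (((splitEquiv S γ).symm p) x))]
    congr 1
    · refine Finset.prod_congr (congrArg (fun i => @Finset.univ _ i) (Subsingleton.elim _ _)) fun x _ => ?_
      have : ((splitEquiv S γ).symm p) x.1 = p.1 x := dif_pos x.2
      rw [this]
    · refine Finset.prod_congr (congrArg (fun i => @Finset.univ _ i) (Subsingleton.elim _ _)) fun x _ => ?_
      have : ((splitEquiv S γ).symm p) x.1 = p.2 x := dif_neg x.2
      rw [this]
  have : ∀ u : S.JO γ,
      (∑ r : (x : {x : S.M // x ∉ γ}) → S.O x.1,
        if S.restr γ ((splitEquiv S γ).symm (u, r)) = t then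
          ∏ x : S.M, g x (((splitEquiv S γ).symm (u, r)) x) else 0)
      = if u = t then
          (∏ x : S.El γ, g x.1 (u x)) *
            ∑ r : (x : {x : S.M // x ∉ γ}) → S.O x.1,
              ∏ x : {x : S.M // x ∉ γ}, g x.1 (r x) else 0 := by
    intro u
    by_cases hu : u = t
    · simp only [hu, if_true]
      rw [Finset.mul_sum]
      refine Finset.sum_congr rfl fun r _ => ?_
      rw [if_pos (by rw [hsplit (t, r)]), hprod (t, r)]
    · simp only [hu, if_false]
      refine Finset.sum_eq_zero fun r _ => ?_
      rw [if_neg (by rw [hsplit (u, r)]; exact hu)]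
  rw [Finset.sum_congr rfl fun u _ => this u]
  rw [Finset.sum_ite_eq' Finset.univ t
      (fun u => (∏ x : S.El γ, g x.1 (u x)) *
        ∑ r : (x : {x : S.M // x ∉ γ}) → S.O x.1,
          ∏ x : {x : S.M // x ∉ γ}, g x.1 (r x))]
  rw [if_pos (Finset.mem_univ t)]
  congr 1
  rw [Finset.prod_univ_sum, Fintype.piFinset_univ]

/-- Abramsky–Brandenburger: a behavior on a compatibility scenario is
noncontextual (admits a global section) if and only if it is factorizable. -/
theorem statement_0 (S : Scenario) (B : Behavior S) (hB : IsProb S B) :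
    IsNC S B ↔ IsFactorizable S B := by
  classical
  constructor
  · rintro ⟨pM, hpos, hsum, hmarg⟩
    refine ⟨Fintype.card S.Glob, fun l => pM ((Fintype.equivFin S.Glob).symm l),
      fun x l o => if (Fintype.equivFin S.Glob).symm l x = o then 1 else 0, ?_, ?_, ?_, ?_⟩
    · intro l; exact hpos _
    · rw [Equiv.sum_comp (Fintype.equivFin S.Glob).symm pM]; exact hsum
    · intro x l
      constructor
      · intro o; dsimp only; split <;> norm_num
      · simp
    · intro γ t
      rw [hmarg γ t,
        ← Equiv.sum_comp (Fintype.equivFin S.Glob).symm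
          (fun o : S.Glob => if S.restr γ.1 o = t then pM o else 0)]
      refine Finset.sum_congr rfl fun l _ => ?_
      set o := (Fintype.equivFin S.Glob).symm l
      beta_reduce
      letI : DecidablePred fun i : S.El γ.1 => (Fintype.equivFin S.Glob).symm l i.1 = t i :=
        fun i => S.decEqO i.1 _ _
      rw [Finset.prod_boole]
      by_cases h : S.restr γ.1 o = t
      · have hx : ∀ i : S.El γ.1, i ∈ Finset.univ →
            (Fintype.equivFin S.Glob).symm l i.1 = t i := fun i _ => congrFun h i
        rw [if_pos h, if_pos hx]; simp; rfl
      · have hx : ¬ ∀ i : S.El γ.1, i ∈ Finset.univ →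
            (Fintype.equivFin S.Glob).symm l i.1 = t i :=
          fun hh => h (funext fun i => hh i (Finset.mem_univ i))
        rw [if_neg h, if_neg hx]; simp
  · rintro ⟨k, q, e, hq0, hq1, he, hfac⟩
    refine ⟨fun o => ∑ l, q l * ∏ x : S.M, e x l (o x), ?_, ?_, ?_⟩
    · intro o
      refine Finset.sum_nonneg fun l _ => mul_nonneg (hq0 l) ?_
      exact Finset.prod_nonneg fun x _ => (he x l).1 (o x)
    · rw [Finset.sum_comm]
      have : ∀ l, (∑ o : S.Glob, q l * ∏ x : S.M, e x l (o x)) = q l := by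
        intro l
        rw [← Finset.mul_sum]
        have : (∑ o : S.Glob, ∏ x : S.M, e x l (o x)) = 1 := by
          rw [← Fintype.piFinset_univ,
            ← Finset.prod_univ_sum (fun _ => Finset.univ) (fun x a => e x l a)]
          exact Finset.prod_eq_one fun x _ => (he x l).2
        rw [this, mul_one]
      rw [Finset.sum_congr rfl fun l _ => this l]; exact hq1
    · intro γ t
      rw [hfac γ t]
      have : ∀ o : S.Glob,
          (if S.restr γ.1 o = t then ∑ l, q l * ∏ x : S.M, e x l (o x) else 0)
            = ∑ l, q l * (if S.restr γ.1 o = t then ∏ x : S.M, e x l (o x) else 0) := by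
        intro o
        by_cases h : S.restr γ.1 o = t
        · simp [h]
        · simp [h]
      rw [Finset.sum_congr rfl fun o _ => this o, Finset.sum_comm]
      refine Finset.sum_congr rfl fun l _ => ?_
      rw [← Finset.mul_sum, split_sum S γ.1 (fun x => e x l) t]
      congr 1
      have : (∏ x : {x : S.M // x ∉ γ.1}, ∑ a, e x.1 l a) = 1 :=
        Finset.prod_eq_one fun x _ => (he x.1 l).2
      rw [this, mul_one]
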